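/- Let C = v_0, v_1, …, v_{k−1}, v_k = v_0 be a min-cycle in a connected graph G. Then there exist a shortest path tree T rooted at v_{⌊k/2⌋} and a shortest path tree T' rooted at v_{⌈k/2⌉} such that T_{v_{⌊k/2⌋}}(v_0) = T'_{v_{⌈k/2⌉}}(v_0). -/

import Mathlib

open SimpleGraph

/-- A cycle `c` in `G` is a min-cycle if for every two vertices `u,v` on the cycle,
the distance between `u` and `v` in the graph consisting of the edges of the cycle
(i.e. the distance along the cycle) equals their distance in `G`. -/
def IsMinCycle {V : Type*} {G : SimpleGraph V} {a : V} (c : G.Walk a a) : Prop :=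
  c.IsCycle ∧ ∀ u ∈ c.support, ∀ v ∈ c.support,
    (SimpleGraph.fromEdgeSet {e | e ∈ c.edges}).dist u v = G.dist u v
/-- `T` is a shortest path tree of `G` rooted at `u`: a spanning tree of `G`
preserving all distances from `u`. -/
def IsSPTree {V : Type*} (G T : SimpleGraph V) (u : V) : Prop :=
  T ≤ G ∧ T.IsTree ∧ ∀ x, T.dist u x = G.dist u x

/-- `subtreeSet T u v` is `T_u(v)`: the set of vertices in the subtree of `T` (rooted at `u`)
below `v`, i.e. the vertices `x` with `d_T(u,x) = d_T(u,v) + d_T(v,x)`. -/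
def subtreeSet {V : Type*} (T : SimpleGraph V) (u v : V) : Set V :=
  {x | T.dist u x = T.dist u v + T.dist v x}

namespace MCAux

open SimpleGraph Walk

variable {V : Type*} {G : SimpleGraph V}

lemma dist_adj_le (hG : G.Connected) {x y : V} (h : G.Adj x y) (u : V) :
    G.dist u y ≤ G.dist u x + 1 := by
  calc G.dist u y ≤ G.dist u x + G.dist x y := hG.dist_triangle
  _ = G.dist u x + 1 := by rw [dist_eq_one_iff_adj.mpr h]

lemma predEx (hG : G.Connected) {u x : V} (h : u ≠ x) :
    ∃ y, G.Adj x y ∧ G.dist u y + 1 = G.dist u x := by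
  have hne : G.dist u x ≠ 0 := by
    rw [dist_ne_zero_iff_ne_and_reachable]; exact ⟨h, hG.preconnected u x⟩
  obtain ⟨w, hw⟩ := exists_walk_of_dist_ne_zero hne
  have hnil : ¬ w.reverse.Nil := by
    rw [not_nil_iff_lt_length, length_reverse, hw]; omega
  obtain ⟨y, hadj, q, hq⟩ := not_nil_iff.mp hnil
  have hlen : q.length + 1 = G.dist u x := by
    have h2 := congrArg Walk.length hq
    rw [length_reverse, hw] at h2
    simpa using h2.symm
  have h1 : G.dist u y ≤ q.length := le_trans (dist_le q.reverse) (by simp)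
  have h2 : G.dist u x ≤ G.dist u y + 1 := dist_adj_le hG hadj.symm u
  exact ⟨y, hadj, by omega⟩

/-- The graph formed by parent edges. -/
def pGraph (p : V → V) (r : V) : SimpleGraph V where
  Adj x y := x ≠ y ∧ ((x ≠ r ∧ y = p x) ∨ (y ≠ r ∧ x = p y))
  symm := ⟨by rintro x y ⟨h1, h2⟩; exact ⟨h1.symm, h2.symm⟩⟩
  loopless := ⟨fun x h => h.1 rfl⟩

variable {r : V} {p : V → V}

lemma pG_le (hp : ∀ x, x ≠ r → G.Adj x (p x) ∧ G.dist r (p x) + 1 = G.dist r x) :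
    pGraph p r ≤ G := by
  rintro x y (⟨hne, ⟨hxr, rfl⟩ | ⟨hyr, rfl⟩⟩ : x ≠ y ∧ ((x ≠ r ∧ y = p x) ∨ (y ≠ r ∧ x = p y)))
  · exact (hp x hxr).1
  · exact ((hp y hyr).1).symm

lemma pG_adj_parent (hp : ∀ x, x ≠ r → G.Adj x (p x) ∧ G.dist r (p x) + 1 = G.dist r x)
    {x : V} (hx : x ≠ r) : (pGraph p r).Adj x (p x) := by
  refine (⟨?_, Or.inl ⟨hx, rfl⟩⟩ : x ≠ p x ∧ ((x ≠ r ∧ p x = p x) ∨ (p x ≠ r ∧ x = p (p x))))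
  intro hxx
  have h2 := (hp x hx).2
  rw [← hxx] at h2
  omega

lemma pG_walk_root (hp : ∀ x, x ≠ r → G.Adj x (p x) ∧ G.dist r (p x) + 1 = G.dist r x) :
    ∀ n x, G.dist r x = n → ∃ w : (pGraph p r).Walk x r, w.length = n := by
  intro n
  induction n using Nat.strong_induction_on with
  | _ n ih =>
    intro x hx
    by_cases hxr : x = r
    · have h0 : G.dist r x = 0 := by rw [hxr]; exact dist_self
      exact ⟨(Walk.nil).copy hxr.symm rfl, by simp only [Walk.length_copy, Walk.length_nil]; omega⟩
    · have h2 := (hp x hxr).2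
      obtain ⟨w, hw⟩ := ih (G.dist r (p x)) (by omega) (p x) rfl
      exact ⟨Walk.cons (pG_adj_parent hp hxr) w, by simp only [Walk.length_cons, hw]; omega⟩

lemma pG_reach (hp : ∀ x, x ≠ r → G.Adj x (p x) ∧ G.dist r (p x) + 1 = G.dist r x) (x : V) :
    (pGraph p r).Reachable x r := ⟨(pG_walk_root hp (G.dist r x) x rfl).choose⟩

lemma pG_connected (hp : ∀ x, x ≠ r → G.Adj x (p x) ∧ G.dist r (p x) + 1 = G.dist r x) :
    (pGraph p r).Connected := by
  have : Nonempty V := ⟨r⟩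
  exact Connected.mk fun x y => (pG_reach hp x).trans (pG_reach hp y).symm

lemma pG_dist_root (hG : G.Connected)
    (hp : ∀ x, x ≠ r → G.Adj x (p x) ∧ G.dist r (p x) + 1 = G.dist r x) (x : V) :
    (pGraph p r).dist r x = G.dist r x := by
  obtain ⟨w, hw⟩ := pG_walk_root hp (G.dist r x) x rfl
  have hle : (pGraph p r).dist r x ≤ G.dist r x := by
    calc (pGraph p r).dist r x = (pGraph p r).dist x r := dist_comm
    _ ≤ w.length := dist_le w
    _ = _ := hw
  have hge : G.dist r x ≤ (pGraph p r).dist r x :=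
    Reachable.dist_anti (pG_le hp) ((pG_reach hp x).symm)
  omega

lemma pG_walk_level (hG : G.Connected)
    (hp : ∀ x, x ≠ r → G.Adj x (p x) ∧ G.dist r (p x) + 1 = G.dist r x)
    {x y : V} (w : (pGraph p r).Walk x y) :
    G.dist r y ≤ G.dist r x + w.length := by
  have h1 : G.dist x y ≤ w.length := by
    have h2 := dist_le (w.mapLe (pG_le hp))
    simpa using h2
  calc G.dist r y ≤ G.dist r x + G.dist x y := hG.dist_triangle
  _ ≤ _ := by omega

lemma pG_adj_cases (hp : ∀ x, x ≠ r → G.Adj x (p x) ∧ G.dist r (p x) + 1 = G.dist r x)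
    {x y : V} (h : (pGraph p r).Adj x y) :
    (x ≠ r ∧ y = p x ∧ G.dist r y + 1 = G.dist r x) ∨
    (y ≠ r ∧ x = p y ∧ G.dist r x + 1 = G.dist r y) := by
  obtain ⟨hne, ⟨hxr, rfl⟩ | ⟨hyr, rfl⟩⟩ := (h : x ≠ y ∧ ((x ≠ r ∧ y = p x) ∨ (y ≠ r ∧ x = p y)))
  · exact Or.inl ⟨hxr, rfl, (hp x hxr).2⟩
  · exact Or.inr ⟨hyr, rfl, (hp y hyr).2⟩

lemma pG_descend (hG : G.Connected)
    (hp : ∀ x, x ≠ r → G.Adj x (p x) ∧ G.dist r (p x) + 1 = G.dist r x)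
    {x u : V} (w : (pGraph p r).Walk u x)
    (hw : w.length + G.dist r u = G.dist r x) : ∃ j, p^[j] x = u := by
  induction w with
  | nil => exact ⟨0, rfl⟩
  | @cons u z _ h q ih =>
    rcases pG_adj_cases hp h with ⟨hur, hpz, hd⟩ | ⟨hzr, hpu, hd⟩
    · exfalso
      have hlvl := pG_walk_level hG hp q
      rw [Walk.length_cons] at hw
      omega
    · rw [Walk.length_cons] at hw
      obtain ⟨j, hj⟩ := ih (by omega)
      refine ⟨j + 1, ?_⟩
      rw [Function.iterate_succ_apply', hj, ← hpu]

lemma pG_acyclic (hG : G.Connected)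
    (hp : ∀ x, x ≠ r → G.Adj x (p x) ∧ G.dist r (p x) + 1 = G.dist r x) :
    (pGraph p r).IsAcyclic := by
  classical
  intro v c hc
  obtain ⟨z, hz_mem, hz_max⟩ := Finset.exists_max_image c.support.toFinset
    (fun y => G.dist r y) (by simp)
  rw [List.mem_toFinset] at hz_mem
  have hmax : ∀ y ∈ c.support, G.dist r y ≤ G.dist r z := fun y hy =>
    hz_max y (List.mem_toFinset.mpr hy)
  have hc' : (c.rotate z hz_mem).IsCycle := hc.rotate hz_mem
  have hmem' : ∀ y ∈ (c.rotate z hz_mem).support, y ∈ c.support := by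
    intro y hy
    rw [Walk.support_eq_cons] at hy
    rcases List.mem_cons.mp hy with rfl | hy
    · exact hz_mem
    · have hrot := Walk.support_rotate c z hz_mem
      exact List.mem_of_mem_tail (hrot.mem_iff.mp hy)
  obtain ⟨w, hadj, q, hq⟩ := Walk.not_nil_iff.mp hc'.not_nil
  rw [hq] at hc'
  have hcyc2 := (Walk.cons_isCycle_iff q hadj).mp hc'
  have hw_mem : w ∈ c.support := hmem' w (by
    rw [hq, Walk.support_cons]
    exact List.mem_cons_of_mem _ q.start_mem_support)
  have h1 : w = p z := by
    rcases pG_adj_cases hp hadj with ⟨_, h, _⟩ | ⟨_, _, hd⟩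
    · exact h
    · exfalso; have := hmax w hw_mem; omega
  have hqnil : ¬ q.reverse.Nil := by
    rw [not_nil_iff_lt_length, length_reverse]
    rcases Nat.eq_zero_or_pos q.length with h0 | h0
    · exact absurd (Walk.eq_of_length_eq_zero h0) hadj.ne'
    · exact h0
  obtain ⟨u2, hadj2, q2, hq2⟩ := Walk.not_nil_iff.mp hqnil
  have hu2_mem : u2 ∈ c.support := by
    apply hmem'
    rw [hq, Walk.support_cons]
    apply List.mem_cons_of_mem
    have : u2 ∈ q.reverse.support := by
      rw [hq2, Walk.support_cons]
      exact List.mem_cons_of_mem _ q2.start_mem_support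
    rwa [Walk.support_reverse, List.mem_reverse] at this
  have h2 : u2 = p z := by
    rcases pG_adj_cases hp hadj2 with ⟨_, h, _⟩ | ⟨_, _, hd⟩
    · exact h
    · exfalso; have := hmax u2 hu2_mem; omega
  have hedge : s(z, u2) ∈ q.edges := by
    have hm : s(z, u2) ∈ q.reverse.edges := by
      rw [hq2, Walk.edges_cons]; exact List.mem_cons_self
    rwa [Walk.edges_reverse, List.mem_reverse] at hm
  apply hcyc2.2
  have h3 : s(z, w) = s(z, u2) := by rw [h1, h2]
  rw [h3]
  exact hedge

/-- Main tree-construction lemma: given a suitable set `S`, there is a shortest path tree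
rooted at `r` whose subtree below `v0` is exactly `S`. -/
lemma exists_sptree (hG : G.Connected) (r v0 : V) (S : Set V)
    (hv0S : v0 ∈ S) (hrS : r ∉ S) (hrv0 : v0 ≠ r)
    (hE1 : ∀ x ∈ S, x ≠ v0 → ∃ y, G.Adj x y ∧ y ∈ S ∧ G.dist r y + 1 = G.dist r x ∧
      G.dist v0 y + 1 = G.dist v0 x)
    (hE2 : ∀ x, x ∉ S → x ≠ r → ∃ y, G.Adj x y ∧ y ∉ S ∧ G.dist r y + 1 = G.dist r x) :
    ∃ T : SimpleGraph V, IsSPTree G T r ∧ subtreeSet T r v0 = S := by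
  classical
  have hsel : ∀ x : V, ∃ y : V, (x = r → y = x) ∧
      (x ≠ r → G.Adj x y ∧ G.dist r y + 1 = G.dist r x) ∧
      (x ∈ S → x ≠ v0 → (y ∈ S ∧ G.dist v0 y + 1 = G.dist v0 x)) ∧
      (x ∉ S → y ∉ S) := by
    intro x
    by_cases hxr : x = r
    · subst hxr
      exact ⟨x, fun _ => rfl, fun h => absurd rfl h, fun h _ => absurd h hrS, fun _ => hrS⟩
    by_cases hxS : x ∈ S
    · by_cases hxv : x = v0
      · subst hxv
        obtain ⟨y, hy1, hy2⟩ := predEx hG (Ne.symm hrv0)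
        exact ⟨y, fun h => absurd h hxr, fun _ => ⟨hy1, hy2⟩,
          fun _ h => absurd rfl h, fun h => absurd hxS h⟩
      · obtain ⟨y, h1, h2, h3, h4⟩ := hE1 x hxS hxv
        exact ⟨y, fun h => absurd h hxr, fun _ => ⟨h1, h3⟩,
          fun _ _ => ⟨h2, h4⟩, fun h => absurd hxS h⟩
    · obtain ⟨y, h1, h2, h3⟩ := hE2 x hxS hxr
      exact ⟨y, fun h => absurd h hxr, fun _ => ⟨h1, h3⟩,
        fun h => absurd h hxS, fun _ => h2⟩
  choose p hp0 hp1 hp2 hp3 using hsel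
  have hp1' : ∀ x, x ≠ r → G.Adj x (p x) ∧ G.dist r (p x) + 1 = G.dist r x := hp1
  refine ⟨pGraph p r, ⟨pG_le hp1', ⟨pG_connected hp1', pG_acyclic hG hp1'⟩,
    pG_dist_root hG hp1'⟩, ?_⟩
  have key1 : ∀ n, ∀ x ∈ S, G.dist v0 x = n →
      (pGraph p r).dist v0 x = n ∧ G.dist r x = G.dist r v0 + n := by
    intro n
    induction n using Nat.strong_induction_on with
    | _ n ih =>
      intro x hxS hxn
      by_cases hxv : x = v0
      · have h0 : G.dist v0 x = 0 := by rw [hxv]; exact dist_self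
        have h0' : (pGraph p r).dist v0 x = 0 := by rw [hxv]; exact dist_self
        refine ⟨by omega, ?_⟩
        rw [hxv]
        omega
      · have hxr : x ≠ r := fun h => hrS (h ▸ hxS)
        obtain ⟨hyS, hyd⟩ := hp2 x hxS hxv
        have hd1 := (hp1 x hxr).2
        obtain ⟨ihd, ihr⟩ := ih (n - 1) (by omega) (p x) hyS (by omega)
        constructor
        · have htri : (pGraph p r).dist v0 x ≤ (pGraph p r).dist v0 (p x) +
              (pGraph p r).dist (p x) x := (pG_connected hp1').dist_triangle
          have hone : (pGraph p r).dist (p x) x ≤ 1 := by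
            have hadj : (pGraph p r).Adj (p x) x := (pG_adj_parent hp1' hxr).symm
            rw [dist_eq_one_iff_adj.mpr hadj]
          have hge : G.dist v0 x ≤ (pGraph p r).dist v0 x :=
            Reachable.dist_anti (pG_le hp1') ((pG_connected hp1').preconnected v0 x)
          omega
        · omega
  apply Set.ext
  intro x
  constructor
  · intro hx
    have hx' : (pGraph p r).dist r x = (pGraph p r).dist r v0 + (pGraph p r).dist v0 x := hx
    by_contra hxS
    have h1 : (pGraph p r).dist r x = G.dist r x := pG_dist_root hG hp1' x
    have h2 : (pGraph p r).dist r v0 = G.dist r v0 := pG_dist_root hG hp1' v0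
    obtain ⟨w, hw⟩ := ((pG_connected hp1').preconnected v0 x).exists_walk_length_eq_dist
    have hlen : w.length + G.dist r v0 = G.dist r x := by omega
    obtain ⟨j, hj⟩ := pG_descend hG hp1' w hlen
    have hiter : ∀ j, p^[j] x ∉ S := by
      intro j
      induction j with
      | zero => exact hxS
      | succ j ihj => rw [Function.iterate_succ_apply']; exact hp3 _ ihj
    exact hiter j (hj ▸ hv0S)
  · intro hxS
    obtain ⟨hd, hr⟩ := key1 (G.dist v0 x) x hxS rfl
    show (pGraph p r).dist r x = (pGraph p r).dist r v0 + (pGraph p r).dist v0 x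
    rw [pG_dist_root hG hp1' x, pG_dist_root hG hp1' v0, hd]
    exact hr

/-- Distance arithmetic: the parent step inside `S`. -/
lemma C_E1 (hG : G.Connected) {a b v0 x : V} {m : ℕ}
    (hma : G.dist a v0 = m) (hmb : G.dist b v0 = m)
    (hx1 : G.dist a x = m + G.dist v0 x) (hx2 : G.dist b x = m + G.dist v0 x)
    (hxv : x ≠ v0) :
    ∃ y, G.Adj x y ∧ (G.dist a y = m + G.dist v0 y ∧ G.dist b y = m + G.dist v0 y) ∧
      G.dist a y + 1 = G.dist a x ∧ G.dist b y + 1 = G.dist b x ∧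
      G.dist v0 y + 1 = G.dist v0 x := by
  obtain ⟨y, hadj, hyd⟩ := predEx hG (Ne.symm hxv)
  have t1 : G.dist a y ≤ m + G.dist v0 y := by
    calc G.dist a y ≤ G.dist a v0 + G.dist v0 y := hG.dist_triangle
    _ = _ := by rw [hma]
  have t2 : G.dist b y ≤ m + G.dist v0 y := by
    calc G.dist b y ≤ G.dist b v0 + G.dist v0 y := hG.dist_triangle
    _ = _ := by rw [hmb]
  have l1 : G.dist a x ≤ G.dist a y + 1 := dist_adj_le hG hadj.symm a
  have l2 : G.dist b x ≤ G.dist b y + 1 := dist_adj_le hG hadj.symm b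
  exact ⟨y, hadj, ⟨by omega, by omega⟩, by omega, by omega, hyd⟩

/-- Distance arithmetic: the parent step outside `S`. -/
lemma C_E2 (hG : G.Connected) {a b v0 x : V} {m : ℕ} (hab : a = b ∨ G.Adj a b)
    (hma : G.dist a v0 = m) (hmb : G.dist b v0 = m) (hav : a ≠ v0) (hbv : b ≠ v0)
    (hxS : ¬ (G.dist a x = m + G.dist v0 x ∧ G.dist b x = m + G.dist v0 x))
    (hxa : x ≠ a) :
    ∃ y, G.Adj x y ∧
      ¬ (G.dist a y = m + G.dist v0 y ∧ G.dist b y = m + G.dist v0 y) ∧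
      G.dist a y + 1 = G.dist a x := by
  have hm1 : 1 ≤ m := by
    have := hG.pos_dist_of_ne hav; omega
  have tria : G.dist a x ≤ m + G.dist v0 x := by
    calc G.dist a x ≤ G.dist a v0 + G.dist v0 x := hG.dist_triangle
    _ = _ := by rw [hma]
  have trib : G.dist b x ≤ m + G.dist v0 x := by
    calc G.dist b x ≤ G.dist b v0 + G.dist v0 x := hG.dist_triangle
    _ = _ := by rw [hmb]
  by_cases h1 : G.dist a x = m + G.dist v0 x
  · have h2 : G.dist b x ≠ m + G.dist v0 x := fun hc => hxS ⟨h1, hc⟩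
    have hab' : G.Adj a b := by
      rcases hab with rfl | h
      · exact absurd h1 h2
      · exact h
    have habd : G.dist a x ≤ 1 + G.dist b x := by
      calc G.dist a x ≤ G.dist a b + G.dist b x := hG.dist_triangle
      _ = 1 + G.dist b x := by rw [dist_eq_one_iff_adj.mpr hab']
    have hbx1 : G.dist b x + 1 = m + G.dist v0 x := by omega
    have hxb : x ≠ b := by
      intro heq
      have h0 : G.dist b x = 0 := by rw [heq]; exact dist_self
      have hpos : 0 < G.dist v0 x := hG.pos_dist_of_ne
        (show v0 ≠ x by intro hv; exact hbv (by rw [← heq, ← hv]))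
      omega
    obtain ⟨z, hadjz, hzd⟩ := predEx hG (Ne.symm hxb)
    refine ⟨z, hadjz, ?_, ?_⟩
    · rintro ⟨-, hbz⟩
      have hlip : G.dist v0 x ≤ G.dist v0 z + 1 := dist_adj_le hG hadjz.symm v0
      omega
    · have u1 : G.dist a z ≤ 1 + G.dist b z := by
        calc G.dist a z ≤ G.dist a b + G.dist b z := hG.dist_triangle
        _ = 1 + G.dist b z := by rw [dist_eq_one_iff_adj.mpr hab']
      have u2 : G.dist a x ≤ G.dist a z + 1 := dist_adj_le hG hadjz.symm a
      omega
  · obtain ⟨y, hadj, hyd⟩ := predEx hG (Ne.symm hxa)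
    refine ⟨y, hadj, ?_, hyd⟩
    rintro ⟨hay, -⟩
    have hlip : G.dist v0 x ≤ G.dist v0 y + 1 := dist_adj_le hG hadj.symm v0
    omega

section Cycle

lemma support_getElem : ∀ {u v : V} (w : G.Walk u v) (i : ℕ) (h : i < w.support.length),
    w.support[i] = w.getVert i := by
  intro u v w
  induction w with
  | nil => intro i h; simp only [Walk.support_nil, List.length_cons, List.length_nil] at h
           interval_cases i
           · simp [Walk.getVert_zero]
  | cons hadj q ih =>
    intro i h
    match i with
    | 0 => simp [Walk.support_cons]
    | (i + 1) =>
      have h' : i < q.support.length := by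
        rw [Walk.support_cons, List.length_cons] at h
        omega
      simp only [Walk.support_cons, List.getElem_cons_succ, Walk.getVert_cons_succ]
      exact ih i h'

variable {v0 : V} {c : G.Walk v0 v0}

lemma cycle_getVert_inj (hc : c.IsCycle) {i j : ℕ} (hi : i < c.length) (hj : j < c.length)
    (h : c.getVert i = c.getVert j) : i = j := by
  classical
  have hnd : c.support.tail.Nodup := ((Walk.isCycle_def c).mp hc).2.2
  have hsl : c.support.length = c.length + 1 := Walk.length_support c
  have htl : c.support.tail.length = c.length := by
    rw [List.length_tail, hsl]
    omega
  have hk1 : 1 ≤ c.length := by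
    have := hc.three_le_length; omega
  have hget : ∀ i (hi : i < c.length), c.support.tail[i]'(by omega) = c.getVert (i + 1) := by
    intro i hi
    rw [List.getElem_tail, support_getElem c (i + 1) (by omega)]
  have hinj : ∀ i j, i < c.length → j < c.length →
      c.getVert (i + 1) = c.getVert (j + 1) → i = j := by
    intro i j hi hj hij
    refine (List.Nodup.getElem_inj_iff hnd (hi := by omega) (hj := by omega)).mp ?_
    rw [hget i hi, hget j hj]
    exact hij
  have h0 : c.getVert c.length = c.getVert 0 := by
    rw [Walk.getVert_length, Walk.getVert_zero]
  rcases Nat.eq_zero_or_pos i with rfl | hi1 <;> rcases Nat.eq_zero_or_pos j with rfl | hj1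
  · rfl
  · exfalso
    have e1 : c.length - 1 + 1 = c.length := by omega
    have e2 : j - 1 + 1 = j := by omega
    have := hinj (c.length - 1) (j - 1) (by omega) (by omega)
      (by rw [e1, e2, h0, ← h])
    omega
  · exfalso
    have e1 : c.length - 1 + 1 = c.length := by omega
    have e2 : i - 1 + 1 = i := by omega
    have := hinj (c.length - 1) (i - 1) (by omega) (by omega)
      (by rw [e1, e2, h0, h])
    omega
  · have e1 : i - 1 + 1 = i := by omega
    have e2 : j - 1 + 1 = j := by omega
    have := hinj (i - 1) (j - 1) (by omega) (by omega) (by rw [e1, e2]; exact h)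
    omega

lemma edge_index : ∀ {u v : V} (w : G.Walk u v) (e : Sym2 V), e ∈ w.edges →
    ∃ i, i < w.length ∧ e = s(w.getVert i, w.getVert (i + 1)) := by
  intro u v w
  induction w with
  | nil => simp
  | @cons u u' v hadj q ih =>
    intro e he
    rw [Walk.edges_cons] at he
    rcases List.mem_cons.mp he with rfl | he
    · refine ⟨0, by simp, ?_⟩
      rw [Walk.getVert_zero]
      have : (Walk.cons hadj q).getVert 1 = q.getVert 0 := Walk.getVert_cons_succ q hadj
      rw [this, Walk.getVert_zero]
    · obtain ⟨i, hi, hei⟩ := ih e he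
      refine ⟨i + 1, by simp only [Walk.length_cons]; omega, ?_⟩
      rw [Walk.getVert_cons_succ, Walk.getVert_cons_succ]
      exact hei

lemma cycle_dist_ub (hG : G.Connected) : ∀ i, i ≤ c.length → G.dist v0 (c.getVert i) ≤ i := by
  intro i
  induction i with
  | zero => intro _; rw [Walk.getVert_zero, dist_self]
  | succ i ih =>
    intro h
    have hadj := c.adj_getVert_succ (by omega : i < c.length)
    have h1 := dist_adj_le hG hadj v0
    have h2 := ih (by omega)
    omega

lemma cycle_dist_ub' (hG : G.Connected) (i : ℕ) (h : i ≤ c.length) :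
    G.dist v0 (c.getVert i) ≤ c.length - i := by
  have hr := cycle_dist_ub (c := c.reverse) hG (c.length - i)
    (by rw [Walk.length_reverse]; omega)
  rw [Walk.getVert_reverse] at hr
  have he : c.length - (c.length - i) = i := by omega
  rwa [he] at hr

lemma cycle_dist_lb (hG : G.Connected) (hmc : IsMinCycle c) (i : ℕ) (hik : i < c.length) :
    min i (c.length - i) ≤ G.dist v0 (c.getVert i) := by
  classical
  rcases Nat.eq_zero_or_pos i with rfl | hi0
  · simp
  have hk3 : 3 ≤ c.length := hmc.1.three_le_length
  set C := SimpleGraph.fromEdgeSet {e | e ∈ c.edges} with hC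
  set k := c.length with hk
  have hex : ∀ i, i < k → ∃ j, j < k ∧ c.getVert j = c.getVert i := fun i hi => ⟨i, hi, rfl⟩
  set f : V → ℕ := fun x => if h : ∃ j, j < k ∧ c.getVert j = x then h.choose else 0 with hf
  have hf_lt : ∀ x, f x < k := by
    intro x
    rw [hf]
    dsimp only
    split_ifs with h
    · exact h.choose_spec.1
    · omega
  have hfg : ∀ j, j < k → f (c.getVert j) = j := by
    intro j hj
    rw [hf]
    dsimp only
    rw [dif_pos (hex j hj)]
    exact cycle_getVert_inj hmc.1 (hex j hj).choose_spec.1 hj (hex j hj).choose_spec.2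
  have hadjf : ∀ x y, C.Adj x y → (f y = f x + 1 ∨ f x = f y + 1 ∨
      (f x + 1 = k ∧ f y = 0) ∨ (f y + 1 = k ∧ f x = 0)) := by
    intro x y hxy
    rw [hC, fromEdgeSet_adj] at hxy
    obtain ⟨i', hi', he⟩ := edge_index c _ hxy.1
    have hfi : f (c.getVert i') = i' := hfg i' hi'
    have hfi1 : f (c.getVert (i' + 1)) = if i' + 1 = k then 0 else i' + 1 := by
      by_cases hcase : i' + 1 = k
      · rw [if_pos hcase]
        have hgv : c.getVert (i' + 1) = c.getVert 0 := by
          rw [hcase, Walk.getVert_zero, hk, Walk.getVert_length]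
        rw [hgv]
        exact hfg 0 (by omega)
      · rw [if_neg hcase]
        exact hfg _ (by omega)
    rcases Sym2.eq_iff.mp he with ⟨hx, hy⟩ | ⟨hx, hy⟩ <;> subst hx <;> subst hy <;>
      split_ifs at hfi1 <;> omega
  have hwb : ∀ x y (w : C.Walk x y),
      min ((f x - f y) + (f y - f x)) (k - ((f x - f y) + (f y - f x))) ≤ w.length := by
    intro x y w
    induction w with
    | nil => simp
    | @cons x z y h q ihq =>
      have h1 := hadjf _ _ h
      have b1 := hf_lt x
      have b2 := hf_lt z
      have b3 := hf_lt y
      rw [Walk.length_cons]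
      omega
  have hne : v0 ≠ c.getVert i := by
    intro h
    have h0 : c.getVert 0 = c.getVert i := by rw [Walk.getVert_zero]; exact h
    have := cycle_getVert_inj hmc.1 (by omega : (0:ℕ) < c.length) hik h0
    omega
  have hgd : G.dist v0 (c.getVert i) ≠ 0 := by
    rw [dist_ne_zero_iff_ne_and_reachable]
    exact ⟨hne, hG.preconnected _ _⟩
  have hmem : c.getVert i ∈ c.support :=
    Walk.mem_support_iff_exists_getVert.mpr ⟨i, rfl, by omega⟩
  have hCd : C.dist v0 (c.getVert i) = G.dist v0 (c.getVert i) :=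
    hmc.2 v0 c.start_mem_support _ hmem
  obtain ⟨w, hw⟩ := exists_walk_of_dist_ne_zero (show C.dist v0 (c.getVert i) ≠ 0 by
    rw [hCd]; exact hgd)
  have hfin := hwb _ _ w
  rw [hw, hCd] at hfin
  have hf0 : f v0 = 0 := by
    have := hfg 0 (by omega)
    rwa [Walk.getVert_zero] at this
  have hfi : f (c.getVert i) = i := hfg i hik
  rw [hf0, hfi] at hfin
  omega

end Cycle

end MCAux

/-- For a min-cycle `c = v_0, …, v_k = v_0` in a finite connected graph `G`, there are
shortest path trees `T` rooted at `v_{⌊k/2⌋}` and `T'` rooted at `v_{⌈k/2⌉}` such that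
`T_{v_{⌊k/2⌋}}(v_0) = T'_{v_{⌈k/2⌉}}(v_0)`. -/
theorem floor_ceil_subtrees_equal {V : Type*} [Fintype V]
    (G : SimpleGraph V) (hG : G.Connected)
    (v0 : V) (c : G.Walk v0 v0) (hmc : IsMinCycle c) :
    ∃ T T' : SimpleGraph V,
      IsSPTree G T (c.getVert (c.length / 2)) ∧
      IsSPTree G T' (c.getVert ((c.length + 1) / 2)) ∧
      subtreeSet T (c.getVert (c.length / 2)) v0 =
        subtreeSet T' (c.getVert ((c.length + 1) / 2)) v0 := by
  classical
  open MCAux in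
  have hk3 : 3 ≤ c.length := hmc.1.three_le_length
  set k := c.length with hk
  set m := k / 2 with hm
  set a := c.getVert m with ha
  set b := c.getVert ((k + 1) / 2) with hb
  have hmk : m < k := by omega
  have hm1k : (k + 1) / 2 < k := by omega
  have hm0 : 1 ≤ m := by omega
  have hav : a ≠ v0 := by
    intro h
    have h0 : c.getVert m = c.getVert 0 := by rw [Walk.getVert_zero]; exact h
    have := cycle_getVert_inj hmc.1 hmk (by omega : (0:ℕ) < c.length) h0
    omega
  have hbv : b ≠ v0 := by
    intro h
    have h0 : c.getVert ((k + 1) / 2) = c.getVert 0 := by rw [Walk.getVert_zero]; exact h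
    have := cycle_getVert_inj hmc.1 hm1k (by omega : (0:ℕ) < c.length) h0
    omega
  have hdav : G.dist a v0 = m := by
    have h1 := cycle_dist_ub (c := c) hG m (by omega)
    have h2 := cycle_dist_lb hG hmc m hmk
    rw [← ha] at h1 h2
    have e2 : min m (c.length - m) = m := by omega
    rw [e2] at h2
    rw [SimpleGraph.dist_comm]
    exact le_antisymm h1 h2
  have hdbv : G.dist b v0 = m := by
    have h1 := cycle_dist_ub' (c := c) hG ((k + 1) / 2) (by omega)
    have h2 := cycle_dist_lb hG hmc ((k + 1) / 2) hm1k
    rw [← hb] at h1 h2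
    have e1 : c.length - (k + 1) / 2 = m := by omega
    have e2 : min ((k + 1) / 2) (c.length - (k + 1) / 2) = m := by omega
    rw [e1] at h1
    rw [e2] at h2
    rw [SimpleGraph.dist_comm]
    exact le_antisymm h1 h2
  have hab : a = b ∨ G.Adj a b := by
    rcases Nat.even_or_odd k with he | ho
    · left
      obtain ⟨t, ht⟩ := he
      rw [hk] at ht
      rw [ha, hb]
      congr 1
      rw [hm, hk]
      omega
    · right
      obtain ⟨t, ht⟩ := ho
      rw [hk] at ht
      have h2 : (k + 1) / 2 = m + 1 := by rw [hm, hk]; omega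
      rw [ha, hb, h2]
      exact c.adj_getVert_succ hmk
  set S : Set V := {x | G.dist a x = m + G.dist v0 x ∧ G.dist b x = m + G.dist v0 x} with hS
  have hv0S : v0 ∈ S := by
    constructor <;> rw [SimpleGraph.dist_self] <;> omega
  have haS : a ∉ S := by
    rintro ⟨h1, -⟩
    rw [SimpleGraph.dist_self] at h1
    omega
  have hbS : b ∉ S := by
    rintro ⟨-, h2⟩
    rw [SimpleGraph.dist_self] at h2
    omega
  have hE1a : ∀ x ∈ S, x ≠ v0 → ∃ y, G.Adj x y ∧ y ∈ S ∧ G.dist a y + 1 = G.dist a x ∧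
      G.dist v0 y + 1 = G.dist v0 x := by
    rintro x ⟨hx1, hx2⟩ hxv
    obtain ⟨y, h1, h2, h3, h4, h5⟩ := C_E1 hG hdav hdbv hx1 hx2 hxv
    exact ⟨y, h1, h2, h3, h5⟩
  have hE1b : ∀ x ∈ S, x ≠ v0 → ∃ y, G.Adj x y ∧ y ∈ S ∧ G.dist b y + 1 = G.dist b x ∧
      G.dist v0 y + 1 = G.dist v0 x := by
    rintro x ⟨hx1, hx2⟩ hxv
    obtain ⟨y, h1, h2, h3, h4, h5⟩ := C_E1 hG hdav hdbv hx1 hx2 hxv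
    exact ⟨y, h1, h2, h4, h5⟩
  have hE2a : ∀ x, x ∉ S → x ≠ a → ∃ y, G.Adj x y ∧ y ∉ S ∧
      G.dist a y + 1 = G.dist a x := by
    intro x hx hxa
    obtain ⟨y, h1, h2, h3⟩ := C_E2 hG hab hdav hdbv hav hbv hx hxa
    exact ⟨y, h1, h2, h3⟩
  have hE2b : ∀ x, x ∉ S → x ≠ b → ∃ y, G.Adj x y ∧ y ∉ S ∧
      G.dist b y + 1 = G.dist b x := by
    intro x hx hxb
    have hab' : b = a ∨ G.Adj b a := by
      rcases hab with h | h
      · exact Or.inl h.symm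
      · exact Or.inr h.symm
    obtain ⟨y, h1, h2, h3⟩ := C_E2 hG hab' hdbv hdav hbv hav
      (fun hc => hx ⟨hc.2, hc.1⟩) hxb
    exact ⟨y, h1, fun hy => h2 ⟨hy.2, hy.1⟩, h3⟩
  obtain ⟨T, hT, hTS⟩ := exists_sptree hG a v0 S hv0S haS (Ne.symm hav) hE1a hE2a
  obtain ⟨T', hT', hTS'⟩ := exists_sptree hG b v0 S hv0S hbS (Ne.symm hbv) hE1b hE2b
  exact ⟨T, T', hT, hT', by rw [hTS, hTS']⟩
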